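/- Let n ≥ 2 and let K and L be convex bodies in ℝⁿ with K ∩ L ≠ ∅. Then ∫_{S^{n−1}} (h_K(u) + h_L(u) − 2·h_{K∩L}(u)) dσ(u) ≥ ∫_{S^{n−1}} |h_K(u) − h_L(u)| dσ(u), with equality if and only if K ∪ L is convex. In particular, equality holds whenever K ⊂ L. -/

import Mathlib

open MeasureTheory

/-- The support function `h_K(u) = sup_{x ∈ K} ⟪x, u⟫` of a set `K ⊆ ℝⁿ`. -/
noncomputable def suppFn {n : ℕ} (K : Set (EuclideanSpace ℝ (Fin n)))
    (u : EuclideanSpace ℝ (Fin n)) : ℝ :=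
  sSup ((fun x => (inner ℝ x u : ℝ)) '' K)

/-- The uniform (rotation invariant) probability measure `σ` on the unit sphere
`S^{n-1} ⊆ ℝⁿ`. -/
noncomputable def sphereProb (n : ℕ) :
    Measure (Metric.sphere (0 : EuclideanSpace ℝ (Fin n)) 1) :=
  ((volume : Measure (EuclideanSpace ℝ (Fin n))).toSphere Set.univ)⁻¹ •
    (volume : Measure (EuclideanSpace ℝ (Fin n))).toSphere

section Aux

open Set Metric
open scoped Pointwise

variable {n : ℕ}

local notation "E" => EuclideanSpace ℝ (Fin n)

lemma suppFn_bdd {K : Set E} (hK : IsCompact K) (u : E) :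
    BddAbove ((fun x => (inner ℝ x u : ℝ)) '' K) :=
  (hK.image (continuous_id.inner continuous_const)).bddAbove

lemma inner_le_suppFn {K : Set E} (hK : IsCompact K) {x : E} (hx : x ∈ K) (u : E) :
    (inner ℝ x u : ℝ) ≤ suppFn K u :=
  le_csSup (suppFn_bdd hK u) ⟨x, hx, rfl⟩

lemma suppFn_le {K : Set E} (hne : K.Nonempty) {u : E} {c : ℝ}
    (h : ∀ x ∈ K, (inner ℝ x u : ℝ) ≤ c) : suppFn K u ≤ c :=
  csSup_le (hne.image _) (by rintro _ ⟨x, hx, rfl⟩; exact h x hx)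

lemma exists_suppFn_eq {K : Set E} (hK : IsCompact K) (hne : K.Nonempty) (u : E) :
    ∃ x ∈ K, (inner ℝ x u : ℝ) = suppFn K u := by
  have hcont : Continuous fun x : E => (inner ℝ x u : ℝ) := continuous_id.inner continuous_const
  obtain ⟨x, hx, hmax⟩ := hK.exists_isMaxOn hne hcont.continuousOn
  exact ⟨x, hx, le_antisymm (inner_le_suppFn hK hx u) (suppFn_le hne fun y hy => hmax hy)⟩

lemma suppFn_mono {K L : Set E} (hL : IsCompact L) (hKL : K ⊆ L) (hne : K.Nonempty) (u : E) :
    suppFn K u ≤ suppFn L u :=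
  suppFn_le hne fun x hx => inner_le_suppFn hL (hKL hx) u

lemma suppFn_add {K : Set E} (hK : IsCompact K) (hne : K.Nonempty) (u v : E) :
    suppFn K (u + v) ≤ suppFn K u + suppFn K v :=
  suppFn_le hne fun x hx => by
    rw [inner_add_right]
    exact add_le_add (inner_le_suppFn hK hx u) (inner_le_suppFn hK hx v)

lemma suppFn_smul {K : Set E} (hK : IsCompact K) (hne : K.Nonempty) {c : ℝ} (hc : 0 ≤ c)
    (u : E) : suppFn K (c • u) = c * suppFn K u := by
  refine le_antisymm (suppFn_le hne fun x hx => ?_) ?_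
  · rw [real_inner_smul_right]
    exact mul_le_mul_of_nonneg_left (inner_le_suppFn hK hx u) hc
  · obtain ⟨x, hx, hxe⟩ := exists_suppFn_eq hK hne u
    calc c * suppFn K u = (inner ℝ x (c • u) : ℝ) := by rw [real_inner_smul_right, hxe]
      _ ≤ _ := inner_le_suppFn hK hx _

lemma suppFn_zero {K : Set E} (hK : IsCompact K) (hne : K.Nonempty) : suppFn K 0 = 0 := by
  refine le_antisymm (suppFn_le hne fun x _ => by simp) ?_
  obtain ⟨x, hx⟩ := hne
  have := inner_le_suppFn hK hx 0
  simpa using this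

lemma suppFn_continuous {K : Set E} (hK : IsCompact K) (hne : K.Nonempty) :
    Continuous (suppFn K) := by
  obtain ⟨R, hR⟩ : ∃ R, K ⊆ Metric.closedBall (0 : E) R := hK.isBounded.subset_closedBall 0
  have hR' : ∀ x ∈ K, ‖x‖ ≤ max R 0 := fun x hx =>
    le_trans (by simpa [mem_closedBall_zero_iff] using hR hx) (le_max_left _ _)
  have key : ∀ u v : E, suppFn K u ≤ suppFn K v + (max R 0) * ‖u - v‖ := by
    intro u v
    refine suppFn_le hne fun x hx => ?_
    have h1 : (inner ℝ x (u - v) : ℝ) ≤ (max R 0) * ‖u - v‖ :=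
      le_trans (real_inner_le_norm x (u - v))
        (mul_le_mul_of_nonneg_right (hR' x hx) (norm_nonneg _))
    have h2 : (inner ℝ x u : ℝ) = inner ℝ x v + inner ℝ x (u - v) := by
      rw [← inner_add_right, add_sub_cancel]
    have h3 := inner_le_suppFn hK hx v
    linarith
  refine LipschitzWith.continuous (K := ⟨max R 0, le_max_right R 0⟩)
    (LipschitzWith.of_dist_le_mul fun u v => ?_)
  show dist (suppFn K u) (suppFn K v) ≤ max R 0 * dist u v
  rw [Real.dist_eq, dist_eq_norm, abs_sub_le_iff]
  constructor
  · have := key u v; linarith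
  · have := key v u; rw [norm_sub_rev] at this; linarith

lemma suppFn_inter_le {K L : Set E} (hK : IsCompact K) (hL : IsCompact L)
    (hKL : (K ∩ L).Nonempty) (u : E) :
    suppFn (K ∩ L) u ≤ min (suppFn K u) (suppFn L u) :=
  le_min (suppFn_mono hK Set.inter_subset_left hKL u)
    (suppFn_mono hL Set.inter_subset_right hKL u)

lemma le_suppFn_inter_of_le {K L : Set E} (hKcp : IsCompact K) (hLcp : IsCompact L)
    (hKne : K.Nonempty) (hLne : L.Nonempty) (hconv : Convex ℝ (K ∪ L)) {u : E}
    (hle : suppFn K u ≤ suppFn L u) : suppFn K u ≤ suppFn (K ∩ L) u := by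
  obtain ⟨x, hx, hxe⟩ := exists_suppFn_eq hKcp hKne u
  obtain ⟨y, hy, hye⟩ := exists_suppFn_eq hLcp hLne u
  have hg : Continuous (fun s : ℝ => (1 - s) • x + s • y) := by continuity
  have hcover : Set.Icc (0:ℝ) 1 ⊆
      (fun s : ℝ => (1 - s) • x + s • y) ⁻¹' K ∪ (fun s : ℝ => (1 - s) • x + s • y) ⁻¹' L := by
    intro s hs
    exact hconv (Set.mem_union_left _ hx) (Set.mem_union_right _ hy)
      (by linarith [hs.2]) hs.1 (by ring)
  obtain ⟨s, hsIcc, hsK, hsL⟩ := (isPreconnected_closed_iff.1 isPreconnected_Icc) _ _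
    (hKcp.isClosed.preimage hg) (hLcp.isClosed.preimage hg) hcover
    ⟨0, ⟨le_refl 0, zero_le_one⟩, by simpa using hx⟩
    ⟨1, ⟨zero_le_one, le_refl 1⟩, by simpa using hy⟩
  have hmem : (1 - s) • x + s • y ∈ K ∩ L := ⟨hsK, hsL⟩
  have hin := inner_le_suppFn (hKcp.inter_right hLcp.isClosed) hmem u
  rw [inner_add_left, real_inner_smul_left, real_inner_smul_left, hxe, hye] at hin
  nlinarith [hsIcc.1, hsIcc.2]

lemma suppFn_inter_eq_min_of_convex {K L : Set E} (hKcp : IsCompact K) (hLcp : IsCompact L)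
    (hKne : K.Nonempty) (hLne : L.Nonempty) (hKL : (K ∩ L).Nonempty)
    (hconv : Convex ℝ (K ∪ L)) (u : E) :
    suppFn (K ∩ L) u = min (suppFn K u) (suppFn L u) := by
  refine le_antisymm (suppFn_inter_le hKcp hLcp hKL u) ?_
  rcases le_total (suppFn K u) (suppFn L u) with h | h
  · rw [min_eq_left h]
    exact le_suppFn_inter_of_le hKcp hLcp hKne hLne hconv h
  · rw [min_eq_right h]
    have := le_suppFn_inter_of_le hLcp hKcp hLne hKne (by rwa [Set.union_comm]) h
    rwa [Set.inter_comm] at this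

lemma sep_aux {K L : Set E} (hKcp : IsCompact K) (hKcv : Convex ℝ K)
    (hLcp : IsCompact L) (hLcv : Convex ℝ L) (hKL : (K ∩ L).Nonempty)
    (hmin : ∀ u : E, suppFn (K ∩ L) u = min (suppFn K u) (suppFn L u))
    {x y : E} (hx : x ∈ K) (hy : y ∈ L) {a b : ℝ} (ha : 0 ≤ a) (hb : 0 ≤ b)
    (hab : a + b = 1) (hzK : a • x + b • y ∉ K) (hzL : a • x + b • y ∉ L) : False := by
  set z := a • x + b • y with hz
  have hKne : K.Nonempty := ⟨x, hx⟩
  have hLne : L.Nonempty := ⟨y, hy⟩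
  have hicp : IsCompact (K ∩ L) := hKcp.inter_right hLcp.isClosed
  have hb0 : 0 < b := by
    rcases hb.lt_or_eq with h | h
    · exact h
    · exfalso; apply hzK
      have ha1 : a = 1 := by linarith
      rw [hz, ha1, ← h]; simpa using hx
  have ha0 : 0 < a := by
    rcases ha.lt_or_eq with h | h
    · exact h
    · exfalso; apply hzL
      have hb1 : b = 1 := by linarith
      rw [hz, hb1, ← h]; simpa using hy
  -- separating functionals
  obtain ⟨f, c, hfK, hfz⟩ := geometric_hahn_banach_closed_point hKcv hKcp.isClosed hzK
  obtain ⟨g, d, hgL, hgz⟩ := geometric_hahn_banach_closed_point hLcv hLcp.isClosed hzL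
  set u := (InnerProductSpace.toDual ℝ (EuclideanSpace ℝ (Fin n))).symm f with hu
  set v := (InnerProductSpace.toDual ℝ (EuclideanSpace ℝ (Fin n))).symm g with hv
  have hu_app : ∀ w : E, (inner ℝ w u : ℝ) = f w := fun w => by
    rw [real_inner_comm]; exact InnerProductSpace.toDual_symm_apply
  have hv_app : ∀ w : E, (inner ℝ w v : ℝ) = g w := fun w => by
    rw [real_inner_comm]; exact InnerProductSpace.toDual_symm_apply
  have hKu : suppFn K u ≤ c := suppFn_le hKne fun p hp => by rw [hu_app]; exact (hfK p hp).le
  have hLv : suppFn L v ≤ d := suppFn_le hLne fun p hp => by rw [hv_app]; exact (hgL p hp).le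
  have hKzu : suppFn K u < (inner ℝ z u : ℝ) := by rw [hu_app]; exact lt_of_le_of_lt hKu hfz
  have hLzv : suppFn L v < (inner ℝ z v : ℝ) := by rw [hv_app]; exact lt_of_le_of_lt hLv hgz
  have hz_inner : ∀ w : E, (inner ℝ z w : ℝ) = a * inner ℝ x w + b * inner ℝ y w := fun w => by
    rw [hz, inner_add_left, real_inner_smul_left, real_inner_smul_left]
  have hzbound : ∀ w : E, (inner ℝ z w : ℝ) ≤ a * suppFn K w + b * suppFn L w := fun w => by
    rw [hz_inner w]
    exact add_le_add (mul_le_mul_of_nonneg_left (inner_le_suppFn hKcp hx w) ha)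
      (mul_le_mul_of_nonneg_left (inner_le_suppFn hLcp hy w) hb)
  have hKLu : suppFn K u < suppFn L u := by
    by_contra hcon
    push_neg at hcon
    have h1 := hzbound u
    have h2 : a * suppFn K u + b * suppFn K u = suppFn K u := by
      linear_combination suppFn K u * hab
    nlinarith [mul_le_mul_of_nonneg_left hcon hb]
  have hLKv : suppFn L v < suppFn K v := by
    by_contra hcon
    push_neg at hcon
    have h1 := hzbound v
    have h2 : a * suppFn L v + b * suppFn L v = suppFn L v := by
      linear_combination suppFn L v * hab
    nlinarith [mul_le_mul_of_nonneg_left hcon ha]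
  -- intermediate value
  set w : ℝ → EuclideanSpace ℝ (Fin n) := fun s => (1 - s) • u + s • v with hw
  have hwc : Continuous w := by
    apply Continuous.add
    · exact (continuous_const.sub continuous_id).smul continuous_const
    · exact continuous_id.smul continuous_const
  set φ : ℝ → ℝ := fun s => suppFn K (w s) - suppFn L (w s) with hφ
  have hφc : Continuous φ :=
    ((suppFn_continuous hKcp hKne).comp hwc).sub ((suppFn_continuous hLcp hLne).comp hwc)
  have hw0 : w 0 = u := by simp [hw]
  have hw1 : w 1 = v := by simp [hw]
  have hφ0 : φ 0 < 0 := by rw [hφ]; simp only [hw0]; linarith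
  have hφ1 : 0 < φ 1 := by rw [hφ]; simp only [hw1]; linarith
  have hmem0 : (0:ℝ) ∈ Set.Icc (φ 0) (φ 1) := ⟨hφ0.le, hφ1.le⟩
  obtain ⟨s0, hs0, hφs0⟩ := intermediate_value_Icc zero_le_one hφc.continuousOn hmem0
  have hs00 : 0 ≤ s0 := hs0.1
  have hs01 : s0 ≤ 1 := hs0.2
  have hKWLW : suppFn K (w s0) = suppFn L (w s0) := by
    have h : suppFn K (w s0) - suppFn L (w s0) = 0 := hφs0
    linarith
  have c1 : suppFn (K ∩ L) (w s0) ≤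
      (1 - s0) * suppFn (K ∩ L) u + s0 * suppFn (K ∩ L) v := by
    calc suppFn (K ∩ L) (w s0) ≤ suppFn (K ∩ L) ((1 - s0) • u) + suppFn (K ∩ L) (s0 • v) :=
          suppFn_add hicp hKL _ _
      _ = _ := by
          rw [suppFn_smul hicp hKL (by linarith) u, suppFn_smul hicp hKL hs00 v]
  have hmu : suppFn (K ∩ L) u = suppFn K u := by rw [hmin u, min_eq_left hKLu.le]
  have hmv : suppFn (K ∩ L) v = suppFn L v := by rw [hmin v, min_eq_right hLKv.le]
  have hmw : suppFn (K ∩ L) (w s0) = suppFn K (w s0) := by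
    rw [hmin _, min_eq_left (le_of_eq hKWLW)]
  have c2 : (1 - s0) * suppFn K u + s0 * suppFn L v <
      (1 - s0) * (inner ℝ z u : ℝ) + s0 * (inner ℝ z v : ℝ) := by
    rcases lt_or_ge s0 1 with h1 | h1
    · have e1 := mul_lt_mul_of_pos_left hKzu (by linarith : (0:ℝ) < 1 - s0)
      have e2 := mul_le_mul_of_nonneg_left hLzv.le hs00
      linarith
    · have hs1 : s0 = 1 := le_antisymm hs01 h1
      rw [hs1]
      simp only [sub_self, zero_mul, one_mul, zero_add]
      exact hLzv
  have c3 : (inner ℝ z (w s0) : ℝ) = (1 - s0) * (inner ℝ z u : ℝ) + s0 * (inner ℝ z v : ℝ) := by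
    rw [hw]
    simp only []
    rw [inner_add_right, real_inner_smul_right, real_inner_smul_right]
  have c4 := hzbound (w s0)
  have c5 : a * suppFn K (w s0) + b * suppFn L (w s0) = suppFn K (w s0) := by
    rw [← hKWLW]; linear_combination suppFn K (w s0) * hab
  rw [hmu, hmv] at c1
  linarith [c1, c2, c3, c4, c5, hmw]

lemma convex_union_of_min {K L : Set E} (hKcp : IsCompact K) (hKcv : Convex ℝ K)
    (hLcp : IsCompact L) (hLcv : Convex ℝ L) (hKL : (K ∩ L).Nonempty)
    (hmin : ∀ u : E, suppFn (K ∩ L) u = min (suppFn K u) (suppFn L u)) :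
    Convex ℝ (K ∪ L) := by
  intro x hx y hy a b ha hb hab
  by_contra hz
  rw [Set.mem_union] at hz
  push_neg at hz
  obtain ⟨hzK, hzL⟩ := hz
  rcases hx with hxK | hxL <;> rcases hy with hyK | hyL
  · exact hzK (hKcv hxK hyK ha hb hab)
  · exact sep_aux hKcp hKcv hLcp hLcv hKL hmin hxK hyL ha hb hab hzK hzL
  · have hmin' : ∀ u : EuclideanSpace ℝ (Fin n),
        suppFn (L ∩ K) u = min (suppFn L u) (suppFn K u) := fun u => by
      rw [Set.inter_comm, hmin u, min_comm]
    exact sep_aux hLcp hLcv hKcp hKcv (by rwa [Set.inter_comm]) hmin' hxL hyK ha hb hab hzL hzK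
  · exact hzL (hLcv hxL hyL ha hb hab)

lemma min_ext {K L : Set E} (hKcp : IsCompact K) (hLcp : IsCompact L)
    (hKne : K.Nonempty) (hLne : L.Nonempty) (hKL : (K ∩ L).Nonempty)
    (hsph : ∀ u : E, ‖u‖ = 1 → suppFn (K ∩ L) u = min (suppFn K u) (suppFn L u)) :
    ∀ u : E, suppFn (K ∩ L) u = min (suppFn K u) (suppFn L u) := by
  have hicp : IsCompact (K ∩ L) := hKcp.inter_right hLcp.isClosed
  intro u
  rcases eq_or_ne u 0 with rfl | hu
  · rw [suppFn_zero hicp hKL, suppFn_zero hKcp hKne, suppFn_zero hLcp hLne]; simp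
  · have hnu : (0:ℝ) < ‖u‖ := norm_pos_iff.2 hu
    set w1 : EuclideanSpace ℝ (Fin n) := ‖u‖⁻¹ • u with hw1
    have hw11 : ‖w1‖ = 1 := by
      rw [hw1, norm_smul, norm_inv, norm_norm, inv_mul_cancel₀ hnu.ne']
    have huu : u = ‖u‖ • w1 := by
      rw [hw1, smul_smul, mul_inv_cancel₀ hnu.ne', one_smul]
    rw [huu, suppFn_smul hicp hKL hnu.le, suppFn_smul hKcp hKne hnu.le,
      suppFn_smul hLcp hLne hnu.le, hsph w1 hw11]
    rcases le_total (suppFn K w1) (suppFn L w1) with h | h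
    · rw [min_eq_left h, min_eq_left (mul_le_mul_of_nonneg_left h hnu.le)]
    · rw [min_eq_right h, min_eq_right (mul_le_mul_of_nonneg_left h hnu.le)]

lemma toSphere_open_pos (hn : 0 < n) {s : Set (Metric.sphere (0 : EuclideanSpace ℝ (Fin n)) 1)}
    (hs : IsOpen s) (hne : s.Nonempty) :
    0 < (volume : Measure (EuclideanSpace ℝ (Fin n))).toSphere s := by
  rw [Measure.toSphere_apply' _ hs.measurableSet]
  refine ENNReal.mul_pos ?_ ?_
  · simp only [ne_eq, Nat.cast_eq_zero]
    rw [finrank_euclideanSpace_fin]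
    omega
  · obtain ⟨W, hWopen, hWs⟩ := isOpen_induced_iff.1 hs
    set g : EuclideanSpace ℝ (Fin n) → EuclideanSpace ℝ (Fin n) := fun x => ‖x‖⁻¹ • x with hg
    have hgc : ContinuousOn g {(0:EuclideanSpace ℝ (Fin n))}ᶜ := by
      apply ContinuousOn.smul (f := fun x : EuclideanSpace ℝ (Fin n) => ‖x‖⁻¹) (g := id)
      · exact (continuous_norm.continuousOn).inv₀ fun x hx =>
          norm_ne_zero_iff.2 (by simpa using hx)
      · exact continuousOn_id
    have hTopen : IsOpen (({(0:EuclideanSpace ℝ (Fin n))}ᶜ ∩ g ⁻¹' W) ∩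
        Metric.ball (0:EuclideanSpace ℝ (Fin n)) 1) :=
      (hgc.isOpen_inter_preimage isOpen_compl_singleton hWopen).inter Metric.isOpen_ball
    have hsub : ({(0:EuclideanSpace ℝ (Fin n))}ᶜ ∩ g ⁻¹' W) ∩
        Metric.ball (0:EuclideanSpace ℝ (Fin n)) 1 ⊆
        Set.Ioo (0:ℝ) 1 • (Subtype.val '' s) := by
      rintro x ⟨⟨hx0, hxW⟩, hxb⟩
      have hx0' : x ≠ 0 := by simpa using hx0
      have hnx : 0 < ‖x‖ := norm_pos_iff.2 hx0'
      have hgx : ‖g x‖ = 1 := by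
        rw [hg]; simp only []
        rw [norm_smul, norm_inv, norm_norm, inv_mul_cancel₀ hnx.ne']
      refine Set.mem_smul.2 ⟨‖x‖, ⟨hnx, mem_ball_zero_iff.1 hxb⟩, g x, ?_, ?_⟩
      · refine ⟨⟨g x, mem_sphere_zero_iff_norm.2 hgx⟩, ?_, rfl⟩
        rw [← hWs]
        exact hxW
      · rw [hg]; simp only []
        rw [smul_smul, mul_inv_cancel₀ hnx.ne', one_smul]
    obtain ⟨p, hp⟩ := hne
    have hp1 : ‖(p : EuclideanSpace ℝ (Fin n))‖ = 1 := mem_sphere_zero_iff_norm.1 p.2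
    have hpT : ((2:ℝ)⁻¹ • (p : EuclideanSpace ℝ (Fin n))) ∈
        ({(0:EuclideanSpace ℝ (Fin n))}ᶜ ∩ g ⁻¹' W) ∩
          Metric.ball (0:EuclideanSpace ℝ (Fin n)) 1 := by
      have hn2 : ‖(2:ℝ)⁻¹ • (p : EuclideanSpace ℝ (Fin n))‖ = 2⁻¹ := by
        rw [norm_smul, hp1, mul_one, norm_inv, Real.norm_ofNat]
      refine ⟨⟨?_, ?_⟩, ?_⟩
      · simp only [Set.mem_compl_iff, Set.mem_singleton_iff]
        intro h
        rw [h, norm_zero] at hn2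
        norm_num at hn2
      · show g ((2:ℝ)⁻¹ • (p : EuclideanSpace ℝ (Fin n))) ∈ W
        have hgp : g ((2:ℝ)⁻¹ • (p : EuclideanSpace ℝ (Fin n))) =
            (p : EuclideanSpace ℝ (Fin n)) := by
          rw [hg]; simp only []
          rw [hn2, smul_smul]
          norm_num
        rw [hgp, ← Set.mem_preimage, hWs]
        exact hp
      · rw [mem_ball_zero_iff, hn2]
        norm_num
    have hpos : 0 < volume (({(0:EuclideanSpace ℝ (Fin n))}ᶜ ∩ g ⁻¹' W) ∩
        Metric.ball (0:EuclideanSpace ℝ (Fin n)) 1) :=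
      hTopen.measure_pos volume ⟨_, hpT⟩
    exact (hpos.trans_le (measure_mono hsub)).ne'

end Aux

/-- If `K, L ⊆ ℝⁿ` (`n ≥ 2`) are convex bodies with `K ∩ L ≠ ∅`, then
`∫_{S^{n-1}} (h_K + h_L - 2 h_{K∩L}) dσ ≥ ∫_{S^{n-1}} |h_K - h_L| dσ`, with equality
if and only if `K ∪ L` is convex; in particular equality holds whenever `K ⊆ L`. -/
theorem stmt0 {n : ℕ} (hn : 2 ≤ n)
    (K L : Set (EuclideanSpace ℝ (Fin n)))
    (hKcp : IsCompact K) (hKcv : Convex ℝ K) (hKint : (interior K).Nonempty)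
    (hLcp : IsCompact L) (hLcv : Convex ℝ L) (hLint : (interior L).Nonempty)
    (hKL : (K ∩ L).Nonempty) :
    (∫ u : Metric.sphere (0 : EuclideanSpace ℝ (Fin n)) 1,
        |suppFn K ↑u - suppFn L ↑u| ∂(sphereProb n))
      ≤ (∫ u : Metric.sphere (0 : EuclideanSpace ℝ (Fin n)) 1,
          (suppFn K ↑u + suppFn L ↑u - 2 * suppFn (K ∩ L) ↑u) ∂(sphereProb n))
    ∧ ((∫ u : Metric.sphere (0 : EuclideanSpace ℝ (Fin n)) 1,
          (suppFn K ↑u + suppFn L ↑u - 2 * suppFn (K ∩ L) ↑u) ∂(sphereProb n))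
        = (∫ u : Metric.sphere (0 : EuclideanSpace ℝ (Fin n)) 1,
            |suppFn K ↑u - suppFn L ↑u| ∂(sphereProb n))
        ↔ Convex ℝ (K ∪ L))
    ∧ (K ⊆ L →
        (∫ u : Metric.sphere (0 : EuclideanSpace ℝ (Fin n)) 1,
            (suppFn K ↑u + suppFn L ↑u - 2 * suppFn (K ∩ L) ↑u) ∂(sphereProb n))
          = (∫ u : Metric.sphere (0 : EuclideanSpace ℝ (Fin n)) 1,
              |suppFn K ↑u - suppFn L ↑u| ∂(sphereProb n))) := by
  have hn0 : 0 < n := by omega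
  haveI : Nontrivial (EuclideanSpace ℝ (Fin n)) :=
    Module.nontrivial_of_finrank_pos (R := ℝ) (by rw [finrank_euclideanSpace_fin]; omega)
  have hKne : K.Nonempty := hKL.mono Set.inter_subset_left
  have hLne : L.Nonempty := hKL.mono Set.inter_subset_right
  have hicp : IsCompact (K ∩ L) := hKcp.inter_right hLcp.isClosed
  -- measure instances
  haveI : Nonempty (Metric.sphere (0 : EuclideanSpace ℝ (Fin n)) 1) :=
    (NormedSpace.sphere_nonempty.mpr zero_le_one).coe_sort
  have hc0 : (volume : Measure (EuclideanSpace ℝ (Fin n))).toSphere Set.univ ≠ 0 :=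
    (toSphere_open_pos hn0 isOpen_univ Set.univ_nonempty).ne'
  have hctop : (volume : Measure (EuclideanSpace ℝ (Fin n))).toSphere Set.univ ≠ ⊤ :=
    measure_ne_top _ _
  haveI hprob : IsProbabilityMeasure (sphereProb n) := ⟨by
    rw [sphereProb, Measure.smul_apply, smul_eq_mul, ENNReal.inv_mul_cancel hc0 hctop]⟩
  haveI hopos : (sphereProb n).IsOpenPosMeasure := ⟨fun U hU hUne => by
    rw [sphereProb, Measure.smul_apply, smul_eq_mul]
    exact mul_ne_zero (ENNReal.inv_ne_zero.2 hctop)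
      (toSphere_open_pos hn0 hU hUne).ne'⟩
  -- the two integrands
  set F : Metric.sphere (0 : EuclideanSpace ℝ (Fin n)) 1 → ℝ :=
    fun u => suppFn K ↑u + suppFn L ↑u - 2 * suppFn (K ∩ L) ↑u with hF
  set G : Metric.sphere (0 : EuclideanSpace ℝ (Fin n)) 1 → ℝ :=
    fun u => |suppFn K ↑u - suppFn L ↑u| with hG
  have cF : Continuous F := by
    rw [hF]
    exact (((suppFn_continuous hKcp hKne).comp continuous_subtype_val).add
      ((suppFn_continuous hLcp hLne).comp continuous_subtype_val)).sub
      (continuous_const.mul ((suppFn_continuous hicp hKL).comp continuous_subtype_val))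
  have cG : Continuous G := by
    rw [hG]
    exact (((suppFn_continuous hKcp hKne).comp continuous_subtype_val).sub
      ((suppFn_continuous hLcp hLne).comp continuous_subtype_val)).abs
  have intF : Integrable F (sphereProb n) :=
    cF.integrable_of_hasCompactSupport (HasCompactSupport.of_compactSpace _)
  have intG : Integrable G (sphereProb n) :=
    cG.integrable_of_hasCompactSupport (HasCompactSupport.of_compactSpace _)
  have key : ∀ u : Metric.sphere (0 : EuclideanSpace ℝ (Fin n)) 1, G u ≤ F u := by
    intro u
    have h1 := (suppFn_inter_le hKcp hLcp hKL (↑u)).trans (min_le_left _ _)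
    have h2 := (suppFn_inter_le hKcp hLcp hKL (↑u)).trans (min_le_right _ _)
    rw [hF, hG]
    simp only []
    rw [abs_sub_le_iff]
    constructor <;> linarith
  have part1 : ∫ u, G u ∂(sphereProb n) ≤ ∫ u, F u ∂(sphereProb n) :=
    integral_mono intG intF key
  have part2 : (∫ u, F u ∂(sphereProb n)) = (∫ u, G u ∂(sphereProb n)) ↔ Convex ℝ (K ∪ L) := by
    constructor
    · intro heq
      have hdiff : ∫ u, (F u - G u) ∂(sphereProb n) = 0 := by
        rw [integral_sub intF intG, sub_eq_zero]
        exact heq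
      have hnonneg : 0 ≤ fun u => F u - G u := fun u => sub_nonneg.2 (key u)
      have hae := (integral_eq_zero_iff_of_nonneg hnonneg (intF.sub intG)).1 hdiff
      have hfg : (fun u => F u - G u) = 0 :=
        (Continuous.ae_eq_iff_eq (sphereProb n) (cF.sub cG) continuous_const).1 hae
      have hsph : ∀ u : EuclideanSpace ℝ (Fin n), ‖u‖ = 1 →
          suppFn (K ∩ L) u = min (suppFn K u) (suppFn L u) := by
        intro u hu
        have h0 := congrFun hfg (⟨u, mem_sphere_zero_iff_norm.2 hu⟩ :
          Metric.sphere (0 : EuclideanSpace ℝ (Fin n)) 1)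
        rw [hF, hG] at h0
        simp only [Pi.zero_apply] at h0
        have h1 := (suppFn_inter_le hKcp hLcp hKL u).trans (min_le_left _ _)
        have h2 := (suppFn_inter_le hKcp hLcp hKL u).trans (min_le_right _ _)
        rcases le_total (suppFn K u) (suppFn L u) with h | h
        · rw [min_eq_left h]
          rw [abs_of_nonpos (by linarith)] at h0
          linarith
        · rw [min_eq_right h]
          rw [abs_of_nonneg (by linarith)] at h0
          linarith
      exact convex_union_of_min hKcp hKcv hLcp hLcv hKL
        (min_ext hKcp hLcp hKne hLne hKL hsph)
    · intro hconv
      have hFG : F = G := by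
        funext u
        have hm := suppFn_inter_eq_min_of_convex hKcp hLcp hKne hLne hKL hconv (↑u)
        rw [hF, hG]
        simp only []
        rcases le_total (suppFn K (↑u : EuclideanSpace ℝ (Fin n)))
            (suppFn L (↑u : EuclideanSpace ℝ (Fin n))) with h | h
        · rw [hm, min_eq_left h, abs_of_nonpos (by linarith)]; ring
        · rw [hm, min_eq_right h, abs_of_nonneg (by linarith)]; ring
      rw [hFG]
  refine ⟨part1, part2, fun hsub => part2.2 ?_⟩
  rw [Set.union_eq_self_of_subset_left hsub]
  exact hLcv
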